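/- Let $c > 0$ and $d \ge 1$. There exists $C > 0$ such that for all $n \ge 2$, $\int_{\{t \in \mathbb{R}^d : |t| \le 1/2\}} \exp(-c\, n\, |t|^2 \log(1/|t|))\, dt \le C (n \log n)^{-d/2}$. -/

import Mathlib

open MeasureTheory Real

private lemma gauss_int {d : ℕ} {a : ℝ} (ha : 0 < a) :
    Integrable (fun t : EuclideanSpace ℝ (Fin d) => Real.exp (-(a * ‖t‖^2))) := by
  have h := (GaussianFourier.integrable_cexp_neg_mul_sq_norm_add (V := EuclideanSpace ℝ (Fin d))
    (b := (a:ℂ)) (by simpa using ha) 0 (0 : EuclideanSpace ℝ (Fin d))).norm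
  simp only [inner_zero_left, mul_zero, zero_mul, add_zero,
    Complex.norm_exp] at h
  convert h using 2 with t
  have h2 : ((-(a:ℂ)) * (‖t‖:ℂ)^2) = ((-(a*‖t‖^2) : ℝ) : ℂ) := by push_cast; ring
  rw [h2, Complex.ofReal_re]

private lemma gauss_val {d : ℕ} {a : ℝ} (ha : 0 < a) :
    ∫ t : EuclideanSpace ℝ (Fin d), Real.exp (-(a * ‖t‖^2)) = (π / a) ^ ((d:ℝ)/2) := by
  have := GaussianFourier.integral_rexp_neg_mul_sq_norm (V := EuclideanSpace ℝ (Fin d)) ha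
  simpa [neg_mul, finrank_euclideanSpace_fin] using this

set_option maxHeartbeats 1000000 in
/-- Key integral estimate: for `c > 0`, `d ≥ 1` there is `C > 0` such that for all `n ≥ 2`,
`∫_{|t| ≤ 1/2} exp(-c n |t|² log(1/|t|)) dt ≤ C (n log n)^(-d/2)`. -/
theorem stmt_9 (c : ℝ) (hc : 0 < c) (d : ℕ) (hd : 1 ≤ d) :
    ∃ C > 0, ∀ n : ℕ, 2 ≤ n →
      ∫ t in Metric.closedBall (0 : EuclideanSpace ℝ (Fin d)) (1 / 2),
          Real.exp (-(c * n * ‖t‖ ^ 2 * Real.log (1 / ‖t‖))) ≤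
        C * ((n : ℝ) * Real.log n) ^ (-(d : ℝ) / 2) := by
  set S : Set (EuclideanSpace ℝ (Fin d)) := Metric.closedBall 0 (1/2) with hS
  set V : ℝ := (volume S).toReal with hV
  have hV0 : 0 ≤ V := ENNReal.toReal_nonneg
  have hlog2 : (0:ℝ) < Real.log 2 := Real.log_pos (by norm_num)
  set K₁ : ℝ := (4 * π / c) ^ ((d:ℝ)/2) with hK₁
  set K₂ : ℝ := V * ((Nat.factorial (2*d) : ℝ) / (c * Real.log 2)^(2*d)) with hK₂
  have hK₁0 : 0 < K₁ := Real.rpow_pos_of_pos (by positivity) _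
  have hK₂0 : 0 ≤ K₂ := by positivity
  refine ⟨K₁ + K₂, by positivity, fun n hn => ?_⟩
  have hN2 : (2:ℝ) ≤ (n:ℝ) := by exact_mod_cast hn
  have hN0 : (0:ℝ) < (n:ℝ) := by linarith
  set N : ℝ := (n:ℝ) with hNdef
  set L : ℝ := Real.log N with hLdef
  have hL2 : Real.log 2 ≤ L := Real.log_le_log (by norm_num) hN2
  have hL0 : 0 < L := lt_of_lt_of_le hlog2 hL2
  set a : ℝ := c/4 * (N * L) with ha_def
  have ha : 0 < a := by positivity
  set b : ℝ := Real.exp (-(c * Real.log 2 * Real.sqrt N)) with hb_def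
  have hb0 : 0 < b := Real.exp_pos _
  -- pointwise bound
  have hpt : ∀ t ∈ S, Real.exp (-(c * N * ‖t‖ ^ 2 * Real.log (1 / ‖t‖)))
      ≤ Real.exp (-(a * ‖t‖^2)) + b := by
    intro t ht
    have hr : ‖t‖ ≤ 1/2 := by simpa [hS, dist_zero_right] using ht
    set r : ℝ := ‖t‖ with hrdef
    have hr0 : 0 ≤ r := norm_nonneg t
    rcases eq_or_lt_of_le hr0 with h0 | h0
    · rw [← h0]
      have h1b : (1:ℝ) ≤ 1 + b := by linarith
      simpa using h1b
    · by_cases hcase : r^4 * N ≤ 1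
      · -- small r
        have hlogr : Real.log r ≤ -(L/4) := by
          have h1 : Real.log (r^4) ≤ Real.log (1/N) := by
            apply Real.log_le_log (by positivity)
            rw [le_div_iff₀ hN0]; linarith
          rw [Real.log_pow, Real.log_div one_ne_zero (ne_of_gt hN0), Real.log_one] at h1
          push_cast at h1
          linarith
        have hstep : a * r^2 ≤ c * N * r^2 * Real.log (1/r) := by
          rw [Real.log_div one_ne_zero (ne_of_gt h0), Real.log_one, zero_sub]
          have h5 : L/4 ≤ -Real.log r := by linarith
          have h6 : c*N*r^2*(L/4) ≤ c*N*r^2*(-Real.log r) :=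
            mul_le_mul_of_nonneg_left h5 (by positivity)
          have heq : a * r^2 = c*N*r^2*(L/4) := by rw [ha_def]; ring
          linarith
        have := Real.exp_le_exp.mpr (neg_le_neg hstep)
        exact le_trans this (le_add_of_nonneg_right hb0.le)
      · -- large r
        push_neg at hcase
        have hsqrt : Real.sqrt N ≤ N * r^2 := by
          have h1 : N ≤ (N * r^2)^2 := by nlinarith [mul_pos hN0 (sub_pos.mpr hcase)]
          calc Real.sqrt N ≤ Real.sqrt ((N*r^2)^2) := Real.sqrt_le_sqrt h1
            _ = N * r^2 := Real.sqrt_sq (by positivity)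
        have hlogr : Real.log 2 ≤ Real.log (1/r) := by
          apply Real.log_le_log (by norm_num)
          rw [le_div_iff₀ h0]; linarith
        have hstep : c * Real.log 2 * Real.sqrt N ≤ c * N * r^2 * Real.log (1/r) := by
          have h1 : c * Real.sqrt N ≤ c * (N * r^2) := by
            exact mul_le_mul_of_nonneg_left hsqrt hc.le
          have h2 : (c * Real.sqrt N) * Real.log 2 ≤ (c * (N * r^2)) * Real.log (1/r) := by
            apply mul_le_mul h1 hlogr hlog2.le (by positivity)
          linear_combination h2
        have := Real.exp_le_exp.mpr (neg_le_neg hstep)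
        rw [← hb_def] at this
        exact le_trans this (le_add_of_nonneg_left (Real.exp_pos _).le)
  -- integrability of dominating function on S
  have hSmeas : MeasurableSet S := Metric.isClosed_closedBall.measurableSet
  have hScompact : IsCompact S := isCompact_closedBall _ _
  have hgauss := gauss_int (d := d) ha
  have hint_g : IntegrableOn (fun t : EuclideanSpace ℝ (Fin d) =>
      Real.exp (-(a * ‖t‖^2)) + b) S := by
    exact (hgauss.restrict).add ((integrableOn_const_iff).mpr (Or.inr hScompact.measure_lt_top))
  -- integral comparison
  have hmono : ∫ t in S, Real.exp (-(c * N * ‖t‖ ^ 2 * Real.log (1 / ‖t‖)))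
      ≤ ∫ t in S, (Real.exp (-(a * ‖t‖^2)) + b) := by
    apply integral_mono_of_nonneg
    · filter_upwards with t using (Real.exp_pos _).le
    · exact hint_g
    · filter_upwards [ae_restrict_mem hSmeas] with t ht using hpt t ht
  have hsplit : ∫ t in S, (Real.exp (-(a * ‖t‖^2)) + b)
      = (∫ t in S, Real.exp (-(a * ‖t‖^2))) + V * b := by
    rw [integral_add hgauss.restrict ((integrableOn_const_iff).mpr (Or.inr hScompact.measure_lt_top))]
    rw [setIntegral_const, smul_eq_mul, measureReal_def]
  have hgle : ∫ t in S, Real.exp (-(a * ‖t‖^2)) ≤ (π / a) ^ ((d:ℝ)/2) := by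
    rw [← gauss_val (d := d) ha]
    apply setIntegral_le_integral hgauss
    filter_upwards with t using (Real.exp_pos _).le
  -- arithmetic part 1
  have hNL0 : 0 < N * L := by positivity
  have harith1 : (π / a) ^ ((d:ℝ)/2) = K₁ * (N*L) ^ (-(d:ℝ)/2) := by
    have : π / a = (4 * π / c) * (N*L)⁻¹ := by
      rw [ha_def]; field_simp
    rw [this, Real.mul_rpow (by positivity) (by positivity), hK₁,
      Real.inv_rpow hNL0.le, ← Real.rpow_neg hNL0.le, neg_div]
  -- arithmetic part 2
  have harith2 : V * b ≤ K₂ * (N*L) ^ (-(d:ℝ)/2) := by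
    have key : b * (N*L) ^ ((d:ℝ)/2) ≤ (Nat.factorial (2*d) : ℝ) / (c * Real.log 2)^(2*d) := by
      have h1 : (N*L) ^ ((d:ℝ)/2) ≤ N ^ d := by
        have hNL : N * L ≤ N^2 := by
          have : L ≤ N := le_trans (Real.log_le_sub_one_of_pos hN0) (by linarith)
          nlinarith
        calc (N*L) ^ ((d:ℝ)/2) ≤ (N^2) ^ ((d:ℝ)/2) :=
              Real.rpow_le_rpow hNL0.le hNL (by positivity)
          _ = N ^ d := by
              rw [← Real.rpow_natCast N 2, ← Real.rpow_mul hN0.le, ← Real.rpow_natCast N d]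
              congr 1
              ring
      have h2 : (c * Real.log 2 * Real.sqrt N)^(2*d) / (Nat.factorial (2*d) : ℝ) ≤ Real.exp (c * Real.log 2 * Real.sqrt N) :=
        Real.pow_div_factorial_le_exp (x := c * Real.log 2 * Real.sqrt N) (by positivity) (2*d)
      have h3 : (c * Real.log 2 * Real.sqrt N)^(2*d) = (c * Real.log 2)^(2*d) * N^d := by
        rw [mul_pow, pow_mul (Real.sqrt N), Real.sq_sqrt hN0.le]
      have hexp0 : 0 < Real.exp (c * Real.log 2 * Real.sqrt N) := Real.exp_pos _
      have hb_eq : b = (Real.exp (c * Real.log 2 * Real.sqrt N))⁻¹ := by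
        rw [hb_def, Real.exp_neg]
      rw [hb_eq]
      rw [div_le_iff₀ (by positivity)] at h2
      rw [h3] at h2
      have h4 : (Real.exp (c * Real.log 2 * Real.sqrt N))⁻¹ * N^d ≤ (Nat.factorial (2*d) : ℝ) / (c * Real.log 2)^(2*d) := by
        rw [inv_mul_le_iff₀ hexp0, ← mul_div_assoc, le_div_iff₀ (by positivity), mul_comm]
        exact h2
      calc (Real.exp (c * Real.log 2 * Real.sqrt N))⁻¹ * (N*L) ^ ((d:ℝ)/2)
          ≤ (Real.exp (c * Real.log 2 * Real.sqrt N))⁻¹ * N^d := by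
            exact mul_le_mul_of_nonneg_left h1 (by positivity)
        _ ≤ (Nat.factorial (2*d) : ℝ) / (c * Real.log 2)^(2*d) := h4
    have hpow0 : (0:ℝ) < (N*L) ^ ((d:ℝ)/2) := Real.rpow_pos_of_pos hNL0 _
    have hneg : (N*L) ^ (-(d:ℝ)/2) = ((N*L) ^ ((d:ℝ)/2))⁻¹ := by
      rw [← Real.rpow_neg hNL0.le]; ring_nf
    rw [hK₂, hneg, mul_assoc]
    apply mul_le_mul_of_nonneg_left _ hV0
    rw [← div_eq_mul_inv, le_div_iff₀ hpow0]
    exact key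
  -- combine
  calc ∫ t in S, Real.exp (-(c * n * ‖t‖ ^ 2 * Real.log (1 / ‖t‖)))
      ≤ (∫ t in S, Real.exp (-(a * ‖t‖^2))) + V * b := by
        rw [← hsplit]; exact hmono
    _ ≤ (π / a) ^ ((d:ℝ)/2) + V * b := by linarith [hgle]
    _ ≤ K₁ * (N*L) ^ (-(d:ℝ)/2) + K₂ * (N*L) ^ (-(d:ℝ)/2) := by
        rw [harith1]; linarith [harith2]
    _ = (K₁ + K₂) * (N * Real.log N) ^ (-(d:ℝ)/2) := by rw [hLdef]; ring
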